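/- Let G be a finite group, H ≤ G, and ρ an irreducible complex representation of H. Suppose that for every g ∈ G with g ∉ H, the space of intertwiners Hom_{H ∩ gHg⁻¹}(ρ^g, ρ) is zero, where ρ^g(x) = ρ(g⁻¹ x g). Then the induced representation Ind_H^G ρ is irreducible. -/

import Mathlib

/-- The space of the representation of `G` induced from `(ρ, V)` on `H ≤ G`, realized as
functions `f : G → V` with `f(hx) = ρ(h) f(x)`, on which `G` acts by right translation. -/
def indSpace {G : Type*} [Group G] (H : Subgroup G) {V : Type*} [AddCommGroup V]
    [Module ℂ V] (ρ : Representation ℂ H V) : Submodule ℂ (G → V) where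
  carrier := {f | ∀ (h : H) (x : G), f ((h : G) * x) = ρ h (f x)}
  add_mem' := by
    intro a b ha hb h x
    simp only [Pi.add_apply, ha h x, hb h x, map_add]
  zero_mem' := by intro h x; simp
  smul_mem' := by
    intro c a ha h x
    simp only [Pi.smul_apply, ha h x, map_smul]


/-- Right translation by `g` as a linear map on `G → V`. -/
def mackeyRtrans {G : Type*} [Group G] {V : Type*} [AddCommGroup V] [Module ℂ V] (g : G) :
    (G → V) →ₗ[ℂ] (G → V) where
  toFun f := fun x => f (x * g)
  map_add' _ _ := rfl
  map_smul' _ _ := rfl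

@[simp] lemma mackeyRtrans_apply {G : Type*} [Group G] {V : Type*} [AddCommGroup V]
    [Module ℂ V] (g : G) (f : G → V) (x : G) : mackeyRtrans g f x = f (x * g) := rfl

lemma mackeyRtrans_mackeyRtrans {G : Type*} [Group G] {V : Type*} [AddCommGroup V]
    [Module ℂ V] (a b : G) (f : G → V) :
    mackeyRtrans a (mackeyRtrans b f) = mackeyRtrans (a * b) f := by
  funext x; simp [mul_assoc]

open Classical in
/-- The canonical embedding `V → Ind_H^G V`, `v ↦ (x ↦ ρ x v` if `x ∈ H`, else `0)`. -/
noncomputable def mackeyFvec {G : Type*} [Group G] (H : Subgroup G) {V : Type*}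
    [AddCommGroup V] [Module ℂ V] (ρ : Representation ℂ H V) : V →ₗ[ℂ] (G → V) where
  toFun v := fun x => if hx : x ∈ H then ρ ⟨x, hx⟩ v else 0
  map_add' v w := by funext x; by_cases hx : x ∈ H <;> simp [hx]
  map_smul' c v := by funext x; by_cases hx : x ∈ H <;> simp [hx]

section aux
variable {G : Type*} [Group G] {H : Subgroup G} {V : Type*} [AddCommGroup V] [Module ℂ V]
  (ρ : Representation ℂ H V)

open Classical in
lemma mackeyFvec_apply (v : V) (x : G) :
    mackeyFvec H ρ v x = if hx : x ∈ H then ρ ⟨x, hx⟩ v else 0 := rfl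

lemma mackeyFvec_mem (v : V) : mackeyFvec H ρ v ∈ indSpace H ρ := by
  intro h x
  classical
  by_cases hx : x ∈ H
  · have hhx : (h : G) * x ∈ H := H.mul_mem h.2 hx
    rw [mackeyFvec_apply, mackeyFvec_apply, dif_pos hx, dif_pos hhx]
    have e : (⟨(h : G) * x, hhx⟩ : H) = h * ⟨x, hx⟩ := rfl
    rw [e, map_mul]; rfl
  · have hhx : (h : G) * x ∉ H := by
      intro hm
      exact hx (by simpa using H.mul_mem (H.inv_mem h.2) hm)
    rw [mackeyFvec_apply, mackeyFvec_apply, dif_neg hx, dif_neg hhx]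
    simp

lemma mackeyRtrans_fvec (h : H) (v : V) :
    mackeyRtrans (h : G) (mackeyFvec H ρ v) = mackeyFvec H ρ (ρ h v) := by
  classical
  funext x
  by_cases hx : x ∈ H
  · have hxh : x * (h : G) ∈ H := H.mul_mem hx h.2
    rw [mackeyRtrans_apply, mackeyFvec_apply, mackeyFvec_apply, dif_pos hx, dif_pos hxh]
    have e : (⟨x * (h : G), hxh⟩ : H) = ⟨x, hx⟩ * h := rfl
    rw [e, map_mul]; rfl
  · have hxh : x * (h : G) ∉ H := fun hm =>
      hx (by simpa using H.mul_mem hm (H.inv_mem h.2))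
    rw [mackeyRtrans_apply, mackeyFvec_apply, mackeyFvec_apply, dif_neg hx, dif_neg hxh]

lemma mackey_sum_decomp [Fintype G] {f : G → V} (hf : f ∈ indSpace H ρ) :
    ∑ g : G, mackeyRtrans g (mackeyFvec H ρ (f g⁻¹)) = (Nat.card H : ℂ) • f := by
  classical
  funext x
  have key : ∀ k : G, mackeyFvec H ρ (f (x⁻¹ * k)⁻¹) (x * (x⁻¹ * k))
      = if k ∈ H then f x else 0 := by
    intro k
    rw [mul_inv_cancel_left, mul_inv_rev, inv_inv, mackeyFvec_apply]
    by_cases hk : k ∈ H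
    · rw [dif_pos hk, if_pos hk]
      have hk' : k⁻¹ ∈ H := H.inv_mem hk
      have e1 : f (k⁻¹ * x) = ρ ⟨k⁻¹, hk'⟩ (f x) := hf ⟨k⁻¹, hk'⟩ x
      rw [e1, ← Module.End.mul_apply, ← map_mul]
      have e2 : (⟨k, hk⟩ * ⟨k⁻¹, hk'⟩ : H) = 1 := by
        ext; simp
      rw [e2, map_one, Module.End.one_apply]
    · rw [dif_neg hk, if_neg hk]
  have hcard : (Finset.univ.filter (· ∈ H)).card = Nat.card H := by
    rw [Nat.card_eq_fintype_card, Fintype.card_subtype]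
  calc (∑ g : G, mackeyRtrans g (mackeyFvec H ρ (f g⁻¹))) x
      = ∑ g : G, mackeyFvec H ρ (f g⁻¹) (x * g) := by
        simp [Finset.sum_apply]
    _ = ∑ k : G, mackeyFvec H ρ (f (x⁻¹ * k)⁻¹) (x * (x⁻¹ * k)) :=
        (Fintype.sum_equiv (Equiv.mulLeft x⁻¹) _ _ (fun k => rfl)).symm
    _ = ∑ k : G, if k ∈ H then f x else 0 :=
        Finset.sum_congr rfl fun k _ => key k
    _ = (Nat.card H : ℂ) • f x := by
        rw [← Finset.sum_filter, Finset.sum_const, hcard, Nat.cast_smul_eq_nsmul]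


end aux

/-- Mackey irreducibility criterion: let `G` be a finite group, `H ≤ G`,
and `ρ` an irreducible complex representation of `H`. If for every `g ∈ G` with `g ∉ H`
the space of intertwiners `Hom_{H ∩ gHg⁻¹}(ρ^g, ρ)` is zero, then `Ind_H^G ρ` is
irreducible. -/
theorem mackey_irreducibility
    (G : Type*) [Group G] [Fintype G] (H : Subgroup G)
    (V : Type*) [AddCommGroup V] [Module ℂ V] [FiniteDimensional ℂ V] [Nontrivial V]
    (ρ : Representation ℂ H V)
    -- `ρ` is irreducible:
    (hirr : ∀ U : Submodule ℂ V, (∀ (h : H), ∀ v ∈ U, ρ h v ∈ U) → U = ⊥ ∨ U = ⊤)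
    -- for `g ∉ H`, every `H ∩ gHg⁻¹`-intertwiner from `ρ^g` to `ρ` is zero:
    (hint : ∀ g : G, g ∉ H → ∀ T : V →ₗ[ℂ] V,
      (∀ x : G, (hx : x ∈ H) → (hgx : g⁻¹ * x * g ∈ H) →
        T ∘ₗ (ρ ⟨g⁻¹ * x * g, hgx⟩ : V →ₗ[ℂ] V) = (ρ ⟨x, hx⟩ : V →ₗ[ℂ] V) ∘ₗ T) →
      T = 0) :
    -- every `G`-stable subspace of `Ind_H^G ρ` is `⊥` or all of it:
    ∀ W : Submodule ℂ (G → V), W ≤ indSpace H ρ →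
      (∀ g : G, ∀ f ∈ W, (fun x => f (x * g)) ∈ W) →
      W = ⊥ ∨ W = indSpace H ρ := by
  intro W hWle hWstab
  by_cases hbot : W = ⊥
  · exact Or.inl hbot
  right
  classical
  -- a linear projection of `G → V` onto `W`
  obtain ⟨U, hU⟩ := Submodule.exists_isCompl W
  set π : (G → V) →ₗ[ℂ] (G → V) := W.subtype ∘ₗ (W.linearProjOfIsCompl U hU) with hπ
  have hπW : ∀ f ∈ W, π f = f := by
    intro f hf
    show W.subtype (W.projectionOnto U hU f) = f
    rw [show f = ((⟨f, hf⟩ : W) : G → V) from rfl,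
      Submodule.projectionOnto_apply_left hU]
    rfl
  have hπmem : ∀ f, π f ∈ W := fun f => (W.linearProjOfIsCompl U hU f).2
  -- the averaged (G-equivariant) projection
  set P : (G → V) →ₗ[ℂ] (G → V) :=
    ∑ g : G, (mackeyRtrans g⁻¹) ∘ₗ π ∘ₗ (mackeyRtrans g) with hP
  have hPapp : ∀ f, P f = ∑ g : G, mackeyRtrans g⁻¹ (π (mackeyRtrans g f)) := by
    intro f
    rw [hP, LinearMap.sum_apply]
    rfl
  have hPmem : ∀ f, P f ∈ W := by
    intro f
    rw [hPapp]
    exact Submodule.sum_mem _ fun g _ => hWstab g⁻¹ _ (hπmem _)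
  have hPid : ∀ f ∈ W, P f = (Fintype.card G : ℂ) • f := by
    intro f hf
    rw [hPapp]
    have hterm : ∀ g : G, mackeyRtrans g⁻¹ (π (mackeyRtrans g f)) = f := by
      intro g
      rw [hπW (mackeyRtrans g f) (hWstab g f hf), mackeyRtrans_mackeyRtrans,
        inv_mul_cancel]
      funext x; simp
    simp only [hterm]
    rw [Finset.sum_const, Finset.card_univ, Nat.cast_smul_eq_nsmul]
  have hPequiv : ∀ (h : G) (f : G → V),
      P (mackeyRtrans h f) = mackeyRtrans h (P f) := by
    intro h f
    rw [hPapp, hPapp, map_sum]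
    refine Fintype.sum_equiv (Equiv.mulRight h) _ _ ?_
    intro k
    show mackeyRtrans k⁻¹ (π (mackeyRtrans k (mackeyRtrans h f)))
        = mackeyRtrans h (mackeyRtrans (k * h)⁻¹ (π (mackeyRtrans (k * h) f)))
    rw [mackeyRtrans_mackeyRtrans k h, mackeyRtrans_mackeyRtrans h,
      mul_inv_rev, mul_inv_cancel_left]
  -- the "matrix coefficients" of `P` along the canonical embedding
  set F : V →ₗ[ℂ] (G → V) := P ∘ₗ mackeyFvec H ρ with hF
  have hFapp : ∀ v, F v = P (mackeyFvec H ρ v) := fun v => rfl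
  have hFind : ∀ v, F v ∈ indSpace H ρ := fun v => hWle (hPmem _)
  have hFH : ∀ (h : H) (v : V), F (ρ h v) = mackeyRtrans (h : G) (F v) := by
    intro h v
    rw [hFapp, hFapp, ← mackeyRtrans_fvec, hPequiv]
  -- evaluation of `F` at `1` is an endomorphism commuting with `ρ`
  set T1 : V →ₗ[ℂ] V := (LinearMap.proj (1 : G)) ∘ₗ F with hT1
  have hT1app : ∀ v, T1 v = F v 1 := fun v => rfl
  have hT1comm : ∀ (h : H) (v : V), T1 (ρ h v) = ρ h (T1 v) := by
    intro h v
    rw [hT1app, hT1app, hFH]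
    have e1 : mackeyRtrans (h : G) (F v) 1 = F v ((h : G) * 1) := by
      rw [mackeyRtrans_apply, one_mul, mul_one]
    rw [e1, hFind v h 1]
  -- Schur: `T1` is a scalar
  obtain ⟨c, hc⟩ := Module.End.exists_eigenvalue (T1 : Module.End ℂ V)
  obtain ⟨v₀, hv₀⟩ := hc.exists_hasEigenvector
  have hT1c : ∀ v, T1 v = c • v := by
    have hK : ∀ v, v ∈ LinearMap.ker (T1 - c • LinearMap.id) := by
      have := hirr (LinearMap.ker (T1 - c • LinearMap.id)) ?_
      · rcases this with h1 | h1
        · exfalso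
          have hv₀mem : v₀ ∈ LinearMap.ker (T1 - c • LinearMap.id) := by
            rw [LinearMap.mem_ker, LinearMap.sub_apply, LinearMap.smul_apply,
              LinearMap.id_apply, hv₀.apply_eq_smul, sub_self]
          rw [h1, Submodule.mem_bot] at hv₀mem
          exact hv₀.2 hv₀mem
        · intro v; rw [h1]; trivial
      · intro h v hv
        rw [LinearMap.mem_ker, LinearMap.sub_apply, LinearMap.smul_apply,
          LinearMap.id_apply] at hv ⊢
        rw [hT1comm, ← map_smul, ← map_sub, hv, map_zero]
    intro v
    have := hK v
    rw [LinearMap.mem_ker, LinearMap.sub_apply, LinearMap.smul_apply,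
      LinearMap.id_apply, sub_eq_zero] at this
    exact this
  -- using the Mackey condition: `F v = c • mackeyFvec v`
  have hFv : ∀ v, F v = c • mackeyFvec H ρ v := by
    intro v
    funext x
    by_cases hx : x ∈ H
    · have e1 : F v x = F v ((((⟨x, hx⟩ : H) : G)) * 1) := by rw [mul_one]
      rw [e1, hFind v ⟨x, hx⟩ 1, ← hT1app, hT1c, map_smul]
      rw [Pi.smul_apply, mackeyFvec_apply, dif_pos hx]
    · -- the evaluation at `x` is an intertwiner from `ρ^x` to `ρ`, hence zero
      set Tx : V →ₗ[ℂ] V := (LinearMap.proj x) ∘ₗ F with hTx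
      have hTxapp : ∀ w, Tx w = F w x := fun w => rfl
      have hTx0 : Tx = 0 := by
        apply hint x hx
        intro y hy hgy
        ext w
        show Tx (ρ ⟨x⁻¹ * y * x, hgy⟩ w) = ρ ⟨y, hy⟩ (Tx w)
        have e2 : Tx (ρ ⟨x⁻¹ * y * x, hgy⟩ w) = F w (x * (x⁻¹ * y * x)) := by
          rw [hTxapp, hFH]
          rfl
        have e3 : x * (x⁻¹ * y * x) = ((⟨y, hy⟩ : H) : G) * x := by
          group
        rw [e2, e3, hFind w ⟨y, hy⟩ x, hTxapp]
      have e4 : F v x = Tx v := rfl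
      rw [e4, hTx0]
      rw [Pi.smul_apply, mackeyFvec_apply, dif_neg hx, smul_zero]
      rfl
  -- hence `P` acts as the scalar `c` on all of `indSpace`
  have hNH : (Nat.card H : ℂ) ≠ 0 := Nat.cast_ne_zero.2 Nat.card_pos.ne'
  have hPc : ∀ f ∈ indSpace H ρ, P f = c • f := by
    intro f hf
    have h1 : (Nat.card H : ℂ) • P f = (Nat.card H : ℂ) • (c • f) := by
      calc (Nat.card H : ℂ) • P f = P ((Nat.card H : ℂ) • f) := (map_smul P _ _).symm
        _ = P (∑ g : G, mackeyRtrans g (mackeyFvec H ρ (f g⁻¹))) := by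
            rw [mackey_sum_decomp ρ hf]
        _ = ∑ g : G, P (mackeyRtrans g (mackeyFvec H ρ (f g⁻¹))) := map_sum P _ _
        _ = ∑ g : G, mackeyRtrans g (c • mackeyFvec H ρ (f g⁻¹)) := by
            refine Finset.sum_congr rfl fun g _ => ?_
            rw [hPequiv, ← hFapp, hFv]
        _ = c • ∑ g : G, mackeyRtrans g (mackeyFvec H ρ (f g⁻¹)) := by
            rw [Finset.smul_sum]
            exact Finset.sum_congr rfl fun g _ => map_smul _ _ _
        _ = c • ((Nat.card H : ℂ) • f) := by rw [mackey_sum_decomp ρ hf]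
        _ = (Nat.card H : ℂ) • (c • f) := smul_comm _ _ _
    exact smul_right_injective (G → V) hNH h1
  -- `c` is nonzero (it equals `|G|`), so `indSpace ≤ W`
  obtain ⟨f₀, hf₀W, hf₀⟩ := Submodule.exists_mem_ne_zero_of_ne_bot hbot
  have hcG : (Fintype.card G : ℂ) = c := by
    have h2 : (Fintype.card G : ℂ) • f₀ = c • f₀ := by
      rw [← hPid f₀ hf₀W, hPc f₀ (hWle hf₀W)]
    have h3 : ((Fintype.card G : ℂ) - c) • f₀ = 0 := by
      rw [sub_smul, h2, sub_self]
    rcases smul_eq_zero.1 h3 with h4 | h4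
    · exact sub_eq_zero.1 h4
    · exact absurd h4 hf₀
  have hc0 : c ≠ 0 := by
    rw [← hcG]
    exact_mod_cast Fintype.card_ne_zero
  refine le_antisymm hWle ?_
  intro f hf
  have h5 : f = c⁻¹ • P f := by
    rw [hPc f hf, smul_smul, inv_mul_cancel₀ hc0, one_smul]
  rw [h5]
  exact W.smul_mem _ (hPmem f)
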